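/- Let G, H be well-tempered scoring games. Then R(G + H) ≥ R(G) + R(H) - max(π(H)·gap_{π(G)}(G), π(G)·gap_{π(H)}(H)) and L(G + H) ≥ L(G) + R(H) - max(π(H)·gap_{1-π(G)}(G), (1-π(G))·gap_{π(H)}(H)), where i·n means n if i=1 and 0 if i=0 (even when n = -∞). -/

import Mathlib

/-- Well-tempered scoring game trees: an integer (final score) or a position
with lists of Left and Right options. -/
inductive WT : Type where
  | int : ℤ → WT
  | node : List WT → List WT → WT

namespace WT

/-- Left options. -/
def lopts : WT → List WT
  | int _ => []
  | node L _ => L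

/-- Right options. -/
def ropts : WT → List WT
  | int _ => []
  | node _ R => R

theorem sizeOf_lt_of_mem_lopts : ∀ {G g : WT}, g ∈ G.lopts → sizeOf g < sizeOf G := by
  intro G g h
  cases G with
  | int n => simp [lopts] at h
  | node L R =>
    simp only [lopts] at h
    have h1 := List.sizeOf_lt_of_mem h
    have h2 : sizeOf (WT.node L R) = 1 + sizeOf L + sizeOf R := by simp
    omega

theorem sizeOf_lt_of_mem_ropts : ∀ {G g : WT}, g ∈ G.ropts → sizeOf g < sizeOf G := by
  intro G g h
  cases G with
  | int n => simp [ropts] at h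
  | node L R =>
    simp only [ropts] at h
    have h1 := List.sizeOf_lt_of_mem h
    have h2 : sizeOf (WT.node L R) = 1 + sizeOf L + sizeOf R := by simp
    omega

/-- Disjunctive sum of two games. -/
def add (G H : WT) : WT :=
  match G, H with
  | int m, int n => int (m + n)
  | G, H =>
    node ((G.lopts.attach.map fun g => add g.1 H) ++ (H.lopts.attach.map fun h => add G h.1))
         ((G.ropts.attach.map fun g => add g.1 H) ++ (H.ropts.attach.map fun h => add G h.1))
termination_by sizeOf G + sizeOf H
decreasing_by
  all_goals
    first
      | (have := sizeOf_lt_of_mem_lopts g.2; omega)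
      | (have := sizeOf_lt_of_mem_lopts h.2; omega)
      | (have := sizeOf_lt_of_mem_ropts g.2; omega)
      | (have := sizeOf_lt_of_mem_ropts h.2; omega)

/-- Negation of a game: swap players and negate scores. -/
def neg : WT → WT
  | int n => int (-n)
  | node L R =>
    node ((WT.node L R).ropts.attach.map fun g => neg g.1)
         ((WT.node L R).lopts.attach.map fun g => neg g.1)
termination_by G => sizeOf G
decreasing_by
  all_goals
    first
      | exact sizeOf_lt_of_mem_lopts g.2
      | exact sizeOf_lt_of_mem_ropts g.2

def lmax : List ℤ → ℤ
  | [] => 0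
  | x :: xs => xs.foldl max x

def lmin : List ℤ → ℤ
  | [] => 0
  | x :: xs => xs.foldl min x

/-- The pair (left outcome, right outcome). -/
def out : WT → ℤ × ℤ
  | int n => (n, n)
  | node L R =>
    (lmax ((WT.node L R).lopts.attach.map fun g => (out g.1).2),
     lmin ((WT.node L R).ropts.attach.map fun g => (out g.1).1))
termination_by G => sizeOf G
decreasing_by
  all_goals
    first
      | exact sizeOf_lt_of_mem_lopts g.2
      | exact sizeOf_lt_of_mem_ropts g.2

/-- Left outcome L(G): optimal score when Left moves first. -/
def Lout (G : WT) : ℤ := G.out.1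

/-- Right outcome R(G): optimal score when Right moves first. -/
def Rout (G : WT) : ℤ := G.out.2

/-- `IsWT G p` : `G` is a well-tempered game of parity `p`
(`false` = even-tempered, `true` = odd-tempered). -/
inductive IsWT : WT → Bool → Prop where
  | int (n : ℤ) : IsWT (WT.int n) false
  | node {L R : List WT} {p : Bool} (hL : L ≠ []) (hR : R ≠ [])
      (hLp : ∀ g ∈ L, IsWT g p) (hRp : ∀ g ∈ R, IsWT g p) :
      IsWT (WT.node L R) (!p)

/-- `G` is a well-tempered game (of some parity). -/
def Wt (G : WT) : Prop := ∃ p, IsWT G p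

/-- Parity, computed structurally (`false` = even-tempered, `true` = odd-tempered;
agrees with `IsWT` on well-tempered games). -/
def par : WT → Bool
  | int _ => false
  | node [] _ => true
  | node (g :: _) _ => !(par g)

/-- Final score under optimal play when Left moves last. -/
def Lf (G : WT) : ℤ := if G.par then G.Lout else G.Rout

/-- Final score under optimal play when Right moves last. -/
def Rf (G : WT) : ℤ := if G.par then G.Rout else G.Lout

/-- `G ≲ H` : for every well-tempered `X`, `L(G+X) ≤ L(H+X)` and `R(G+X) ≤ R(H+X)`. -/
def Le (G H : WT) : Prop :=
  ∀ X : WT, X.Wt → (G.add X).Lout ≤ (H.add X).Lout ∧ (G.add X).Rout ≤ (H.add X).Rout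

/-- `G ≳ H`. -/
def Ge (G H : WT) : Prop := Le H G

/-- `G ≈ H` : equivalence of scoring games. -/
def Equiv (G H : WT) : Prop :=
  ∀ X : WT, X.Wt → (G.add X).Lout = (H.add X).Lout ∧ (G.add X).Rout = (H.add X).Rout

/-- `G` and `H` are well-tempered with the same parity. -/
def SamePar (G H : WT) : Prop := ∃ p, IsWT G p ∧ IsWT H p

/-- `G` takes values in `S`: every integer subgame lies in `S`. -/
inductive Valued (S : Set ℤ) : WT → Prop where
  | int {n : ℤ} : n ∈ S → Valued S (WT.int n)
  | node {L R : List WT} : (∀ g ∈ L, Valued S g) → (∀ g ∈ R, Valued S g) →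
      Valued S (WT.node L R)

/-- `Subgame H G` : `H` is a subgame of `G`. -/
inductive Subgame : WT → WT → Prop where
  | refl (G : WT) : Subgame G G
  | left {H G' : WT} {L R : List WT} : G' ∈ L → Subgame H G' → Subgame H (WT.node L R)
  | right {H G' : WT} {L R : List WT} : G' ∈ R → Subgame H G' → Subgame H (WT.node L R)

/-- `gap G p` : supremum of `R(H) - L(H)` over subgames `H` of `G` of parity `p`
(as an element of `WithBot ℤ`; the supremum of the empty set is `⊥ = -∞`). -/
noncomputable def gap (G : WT) (p : Bool) : WithBot ℤ :=
  sSup {x : WithBot ℤ | ∃ H : WT, Subgame H G ∧ IsWT H p ∧ x = ((H.Rout - H.Lout : ℤ) : WithBot ℤ)}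

/-- Heating by `t`. -/
def heat (t : ℤ) : WT → WT
  | int n => int n
  | node L R =>
    node ((WT.node L R).lopts.attach.map fun g => (WT.int t).add (heat t g.1))
         ((WT.node L R).ropts.attach.map fun g => (WT.int (-t)).add (heat t g.1))
termination_by G => sizeOf G
decreasing_by
  all_goals
    first
      | exact sizeOf_lt_of_mem_lopts g.2
      | exact sizeOf_lt_of_mem_ropts g.2

end WT

/-- `i·x` for `i ∈ {0,1}`, `x ∈ ℤ ∪ {-∞}`: equals `x` if `i = 1` and `0` if `i = 0`
(even when `x = -∞`). -/
noncomputable def bmul (i : Bool) (x : WithBot ℤ) : WithBot ℤ :=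
  if i then x else ((0 : ℤ) : WithBot ℤ)

namespace WT

theorem out_node (L R : List WT) :
    out (node L R) = (lmax (L.map fun g => (out g).2), lmin (R.map fun g => (out g).1)) := by
  rw [out]
  simp [lopts, ropts, List.attach_map_val]

theorem Lout_node (L R : List WT) : Lout (node L R) = lmax (L.map Rout) := by
  simp only [Lout, out_node]; rfl

theorem Rout_node (L R : List WT) : Rout (node L R) = lmin (R.map Lout) := by
  simp only [Rout, out_node]; rfl

theorem add_eq_node (G H : WT) (h : (∀ n, G ≠ int n) ∨ (∀ n, H ≠ int n)) :
    G.add H = node ((G.lopts.map fun g => g.add H) ++ (H.lopts.map fun h => G.add h))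
                   ((G.ropts.map fun g => g.add H) ++ (H.ropts.map fun h => G.add h)) := by
  cases G with
  | int n =>
    cases H with
    | int m => rcases h with h | h <;> exact absurd rfl (h _)
    | node L R => rw [add] <;> simp [List.attach_map_val]
  | node L R =>
    cases H with
    | int m => rw [add] <;> simp [List.attach_map_val]
    | node L' R' => rw [add] <;> simp [List.attach_map_val]

end WT
namespace WT

theorem foldl_min_mem (x : ℤ) (l : List ℤ) : l.foldl min x ∈ x :: l := by
  induction l generalizing x with
  | nil => simp
  | cons y ys ih =>
    have := ih (min x y)
    rcases List.mem_cons.1 this with h | h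
    · rcases min_cases x y with ⟨h1, _⟩ | ⟨h1, _⟩ <;> simp [List.foldl, h ▸ h1]
    · simp [List.foldl, h]

theorem foldl_max_mem (x : ℤ) (l : List ℤ) : l.foldl max x ∈ x :: l := by
  induction l generalizing x with
  | nil => simp
  | cons y ys ih =>
    have := ih (max x y)
    rcases List.mem_cons.1 this with h | h
    · rcases max_cases x y with ⟨h1, _⟩ | ⟨h1, _⟩ <;> simp [List.foldl, h ▸ h1]
    · simp [List.foldl, h]

theorem lmin_mem {l : List ℤ} (h : l ≠ []) : lmin l ∈ l := by
  cases l with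
  | nil => exact absurd rfl h
  | cons x xs => exact foldl_min_mem x xs

theorem lmax_mem {l : List ℤ} (h : l ≠ []) : lmax l ∈ l := by
  cases l with
  | nil => exact absurd rfl h
  | cons x xs => exact foldl_max_mem x xs

theorem foldl_min_le_base (l : List ℤ) (x : ℤ) : l.foldl min x ≤ x := by
  induction l generalizing x with
  | nil => simp
  | cons z zs ih => exact le_trans (ih (min x z)) (min_le_left _ _)

theorem base_le_foldl_max (l : List ℤ) (x : ℤ) : x ≤ l.foldl max x := by
  induction l generalizing x with
  | nil => simp
  | cons z zs ih => exact le_trans (le_max_left x z) (ih (max x z))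

theorem foldl_min_le (l : List ℤ) (x : ℤ) {y : ℤ} (hy : y ∈ l) : l.foldl min x ≤ y := by
  induction l generalizing x with
  | nil => simp at hy
  | cons z zs ih =>
    rw [List.foldl_cons]
    rcases List.mem_cons.1 hy with h | h
    · exact le_trans (foldl_min_le_base zs _) (by rw [h]; exact min_le_right _ _)
    · exact ih _ h

theorem le_foldl_max (l : List ℤ) (x : ℤ) {y : ℤ} (hy : y ∈ l) : y ≤ l.foldl max x := by
  induction l generalizing x with
  | nil => simp at hy
  | cons z zs ih =>
    rw [List.foldl_cons]
    rcases List.mem_cons.1 hy with h | h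
    · exact le_trans (by rw [h]; exact le_max_right _ _) (base_le_foldl_max zs _)
    · exact ih _ h

theorem lmin_le_of_mem {l : List ℤ} {y : ℤ} (hy : y ∈ l) : lmin l ≤ y := by
  cases l with
  | nil => simp at hy
  | cons x xs =>
    rcases List.mem_cons.1 hy with h | h
    · exact h ▸ foldl_min_le_base xs x
    · exact foldl_min_le xs x h

theorem le_lmax_of_mem {l : List ℤ} {y : ℤ} (hy : y ∈ l) : y ≤ lmax l := by
  cases l with
  | nil => simp at hy
  | cons x xs =>
    rcases List.mem_cons.1 hy with h | h
    · exact h ▸ base_le_foldl_max xs x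
    · exact le_foldl_max xs x h

end WT
namespace WT

def gbound : WT → ℤ
  | int _ => 0
  | node L R => max ((node L R).Rout - (node L R).Lout)
      (lmax (((node L R).lopts ++ (node L R).ropts).attach.map fun g => gbound g.1))
termination_by G => sizeOf G
decreasing_by
  rcases List.mem_append.1 g.2 with h | h
  · exact sizeOf_lt_of_mem_lopts h
  · exact sizeOf_lt_of_mem_ropts h

theorem gbound_node (L R : List WT) :
    gbound (node L R) = max ((node L R).Rout - (node L R).Lout) (lmax ((L ++ R).map gbound)) := by
  rw [gbound]
  simp [lopts, ropts, List.attach_map_val]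

theorem sub_le_gbound {H G : WT} (h : Subgame H G) : H.Rout - H.Lout ≤ gbound G := by
  induction h with
  | refl =>
    cases H with
    | int n => simp [gbound, Lout, Rout, out]
    | node L R => rw [gbound_node]; exact le_max_left _ _
  | left hmem _ ih =>
    refine le_trans ih ?_
    rw [gbound_node]
    exact le_trans (le_lmax_of_mem (List.mem_map_of_mem (List.mem_append_left _ hmem))) (le_max_right _ _)
  | right hmem _ ih =>
    refine le_trans ih ?_
    rw [gbound_node]
    exact le_trans (le_lmax_of_mem (List.mem_map_of_mem (List.mem_append_right _ hmem))) (le_max_right _ _)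

theorem gapSet_bdd (G : WT) (p : Bool) :
    BddAbove {x : WithBot ℤ | ∃ H : WT, Subgame H G ∧ IsWT H p ∧ x = ((H.Rout - H.Lout : ℤ) : WithBot ℤ)} := by
  refine ⟨((gbound G : ℤ) : WithBot ℤ), fun x hx => ?_⟩
  obtain ⟨H, hs, _, rfl⟩ := hx
  exact_mod_cast sub_le_gbound hs

theorem le_gap {G : WT} {p : Bool} (hG : IsWT G p) :
    ((G.Rout - G.Lout : ℤ) : WithBot ℤ) ≤ G.gap p :=
  le_csSup (gapSet_bdd G p) ⟨G, Subgame.refl G, hG, rfl⟩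

theorem gap_mono {g : WT} {L R : List WT} (h : g ∈ L ∨ g ∈ R) (p : Bool) :
    g.gap p ≤ (node L R).gap p := by
  rcases Set.eq_empty_or_nonempty {x : WithBot ℤ | ∃ H : WT, Subgame H g ∧ IsWT H p ∧ x = ((H.Rout - H.Lout : ℤ) : WithBot ℤ)} with he | hne
  · rw [gap, he, WithBot.sSup_empty]; exact bot_le
  · refine csSup_le_csSup (gapSet_bdd _ p) hne ?_
    rintro x ⟨H, hs, hp, rfl⟩
    rcases h with h | h
    · exact ⟨H, Subgame.left h hs, hp, rfl⟩
    · exact ⟨H, Subgame.right h hs, hp, rfl⟩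

theorem gap_int_false (n : ℤ) : (int n).gap false = ((0:ℤ) : WithBot ℤ) := by
  have : {x : WithBot ℤ | ∃ H : WT, Subgame H (int n) ∧ IsWT H false ∧ x = ((H.Rout - H.Lout : ℤ) : WithBot ℤ)}
      = {((0:ℤ) : WithBot ℤ)} := by
    ext x
    constructor
    · rintro ⟨H, hs, hp, rfl⟩
      cases hs
      simp [Lout, Rout, out]
    · rintro rfl
      exact ⟨int n, Subgame.refl _, IsWT.int n, by simp [Lout, Rout, out]⟩
  rw [gap, this, csSup_singleton]

theorem bmul_false (x : WithBot ℤ) : bmul false x = ((0:ℤ) : WithBot ℤ) := rfl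

theorem bmul_true (x : WithBot ℤ) : bmul true x = x := rfl

theorem bmul_zero (i : Bool) : bmul i ((0:ℤ) : WithBot ℤ) = ((0:ℤ) : WithBot ℤ) := by
  cases i <;> simp [bmul]

theorem bmul_zero' (i : Bool) : bmul i (0 : WithBot ℤ) = 0 := by
  cases i <;> simp [bmul]

theorem bmul_mono (i : Bool) {x y : WithBot ℤ} (h : x ≤ y) : bmul i x ≤ bmul i y := by
  cases i <;> simp [bmul, h]

end WT
namespace WT

theorem out_int (n : ℤ) : out (int n) = (n, n) := by rw [out]

theorem Lout_int (n : ℤ) : Lout (int n) = n := by simp [Lout, out_int]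
theorem Rout_int (n : ℤ) : Rout (int n) = n := by simp [Rout, out_int]

theorem add_int_int (n m : ℤ) : (int n).add (int m) = int (n + m) := by rw [add]

theorem Rout_add (G H : WT) (h : (∀ n, G ≠ int n) ∨ (∀ n, H ≠ int n)) :
    Rout (G.add H) = lmin ((G.ropts.map fun g => Lout (g.add H)) ++ (H.ropts.map fun h => Lout (G.add h))) := by
  rw [add_eq_node G H h, Rout_node, List.map_append, List.map_map, List.map_map]
  rfl

theorem Lout_add (G H : WT) (h : (∀ n, G ≠ int n) ∨ (∀ n, H ≠ int n)) :
    Lout (G.add H) = lmax ((G.lopts.map fun g => Rout (g.add H)) ++ (H.lopts.map fun h => Rout (G.add h))) := by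
  rw [add_eq_node G H h, Lout_node, List.map_append, List.map_map, List.map_map]
  rfl

theorem exists_lopt {L R : List WT} (hL : L ≠ []) :
    ∃ g ∈ L, Rout g = Lout (node L R) := by
  rw [Lout_node]
  have := lmax_mem (l := L.map Rout) (by simpa using hL)
  obtain ⟨g, hg, heq⟩ := List.mem_map.1 this
  exact ⟨g, hg, heq⟩

theorem Rout_le_of_ropt {L R : List WT} {g : WT} (hg : g ∈ R) :
    Rout (node L R) ≤ Lout g := by
  rw [Rout_node]
  exact lmin_le_of_mem (List.mem_map_of_mem hg)

end WT
namespace WT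

theorem node_ne_int (L R : List WT) (n : ℤ) : node L R ≠ int n := fun h => by cases h

theorem main : ∀ (n : ℕ) (G H : WT) (p q : Bool), sizeOf G + sizeOf H ≤ n →
    IsWT G p → IsWT H q →
    ((G.Rout : WithBot ℤ) + (H.Rout : WithBot ℤ) ≤
      ((G.add H).Rout : WithBot ℤ) + max (bmul q (G.gap p)) (bmul p (H.gap q))) ∧
    ((G.Lout : WithBot ℤ) + (H.Rout : WithBot ℤ) ≤
      ((G.add H).Lout : WithBot ℤ) + max (bmul q (G.gap (!p))) (bmul (!p) (H.gap q))) ∧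
    ((G.Rout : WithBot ℤ) + (H.Lout : WithBot ℤ) ≤
      ((G.add H).Lout : WithBot ℤ) + max (bmul (!q) (G.gap p)) (bmul p (H.gap (!q)))) := by
  intro n
  induction n with
  | zero =>
    intro G H p q hle _ _
    exfalso
    have h1 : 0 < sizeOf G := by cases G <;> simp +arith +decide
    have h2 : 0 < sizeOf H := by cases H <;> simp +arith +decide
    omega
  | succ n ih =>
    intro G H p q hle hG hH
    refine ⟨?_, ?_, ?_⟩
    · -- A
      by_cases hii : ∃ a b, G = int a ∧ H = int b
      · obtain ⟨a, b, rfl, rfl⟩ := hii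
        cases hG; cases hH
        simp only [add_int_int, Rout_int, gap_int_false, bmul_zero, bmul_false, max_self,
          WithBot.coe_zero, add_zero]
        rw [← WithBot.coe_add]
      · have hnode : (∀ m, G ≠ int m) ∨ (∀ m, H ≠ int m) := by
          cases G with
          | int a =>
            cases H with
            | int b => exact absurd ⟨a, b, rfl, rfl⟩ hii
            | node L R => exact Or.inr (node_ne_int L R)
          | node L R => exact Or.inl (node_ne_int L R)
        have hne' : G.ropts ≠ [] ∨ H.ropts ≠ [] := by
          rcases hnode with h0 | h0
          · left
            cases hG with
            | int a => exact absurd rfl (h0 a)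
            | node hL hR hLp hRp => simpa [ropts] using ‹_ ≠ ([] : List WT)›
          · right
            cases hH with
            | int b => exact absurd rfl (h0 b)
            | node hL hR hLp hRp => simpa [ropts] using ‹_ ≠ ([] : List WT)›
        rw [Rout_add G H hnode]
        have hne : ((G.ropts.map fun g => Lout (g.add H)) ++ (H.ropts.map fun h => Lout (G.add h))) ≠ [] := by
          rcases hne' with h0 | h0 <;> intro hc <;>
            rw [List.append_eq_nil_iff] at hc <;>
            [exact h0 (List.map_eq_nil_iff.1 hc.1); exact h0 (List.map_eq_nil_iff.1 hc.2)]
        have hmem := lmin_mem hne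
        rcases List.mem_append.1 hmem with hm | hm
        · obtain ⟨g, hg, heq⟩ := List.mem_map.1 hm
          rw [← heq]
          cases hG with
          | int a => simp [ropts] at hg
          | @node L R p₀ hL hR hLp hRp =>
            have hg' : g ∈ R := hg
            have hsz : sizeOf g + sizeOf H ≤ n := by
              have := sizeOf_lt_of_mem_ropts (G := node L R) hg
              omega
            have hB := (ih g H p₀ q hsz (hRp g hg') hH).2.1
            refine le_trans (add_le_add_left (WithBot.coe_le_coe.2 (Rout_le_of_ropt hg')) _)
              (le_trans hB ?_)
            exact add_le_add_right (max_le_max (bmul_mono q (gap_mono (Or.inr hg') _)) le_rfl) _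
        · obtain ⟨h, hh, heq⟩ := List.mem_map.1 hm
          rw [← heq]
          cases hH with
          | int b => simp [ropts] at hh
          | @node L' R' q₀ hL' hR' hLp' hRp' =>
            have hh' : h ∈ R' := hh
            have hsz : sizeOf G + sizeOf h ≤ n := by
              have := sizeOf_lt_of_mem_ropts (G := node L' R') hh
              omega
            have hB' := (ih G h p q₀ hsz hG (hRp' h hh')).2.2
            refine le_trans (add_le_add_right (WithBot.coe_le_coe.2 (Rout_le_of_ropt hh')) _)
              (le_trans hB' ?_)
            exact add_le_add_right (max_le_max le_rfl (bmul_mono p (gap_mono (Or.inr hh') _))) _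
    · -- B
      cases hG with
      | int a =>
        cases hH with
        | int b =>
          simp only [add_int_int, Rout_int, Lout_int, gap_int_false, bmul_zero, bmul_false,
            bmul_true, Bool.not_false, max_self, WithBot.coe_zero, add_zero, max_comm]
          rw [← WithBot.coe_add]
        | @node L' R' q₀ hL' hR' hLp' hRp' =>
          obtain ⟨h, hh, hRout⟩ := exists_lopt (R := R') hL'
          have hsz : sizeOf (int a) + sizeOf h ≤ n := by
            have := sizeOf_lt_of_mem_lopts (G := node L' R') hh
            omega
          have hA := (ih (int a) h false q₀ hsz (IsWT.int a) (hLp' h hh)).1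
          have hA' : ((a : ℤ) + (Lout (node L' R') : ℤ) : ℤ) ≤ Rout ((int a).add h) := by
            rw [← hRout]
            have := hA
            simp only [Rout_int, gap_int_false, bmul_zero, bmul_false, WithBot.coe_zero,
              bmul_zero', max_self, add_zero, ← WithBot.coe_add] at this
            exact_mod_cast this
          have hstep : Rout ((int a).add h) ≤ Lout ((int a).add (node L' R')) := by
            rw [Lout_add _ _ (Or.inr (node_ne_int L' R'))]
            exact le_lmax_of_mem (List.mem_append.2 (Or.inr (List.mem_map_of_mem hh)))
          have hgap := le_gap (IsWT.node hL' hR' hLp' hRp')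
          calc ((Lout (int a) : ℤ) : WithBot ℤ) + (Rout (node L' R') : ℤ)
              = ((a + Lout (node L' R') : ℤ) : WithBot ℤ)
                + ((Rout (node L' R') - Lout (node L' R') : ℤ) : WithBot ℤ) := by
                rw [Lout_int, ← WithBot.coe_add, ← WithBot.coe_add]
                congr 1
                ring
            _ ≤ ((Lout ((int a).add (node L' R')) : ℤ) : WithBot ℤ) + (node L' R').gap (!q₀) :=
                add_le_add (WithBot.coe_le_coe.2 (le_trans hA' hstep)) hgap
            _ ≤ _ := by
                refine add_le_add_right (le_trans ?_ (le_max_right _ _)) _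
                simp [bmul]
      | @node L R p₀ hL hR hLp hRp =>
        obtain ⟨g, hg, hRout⟩ := exists_lopt (R := R) hL
        have hsz : sizeOf g + sizeOf H ≤ n := by
          have := sizeOf_lt_of_mem_lopts (G := node L R) hg
          omega
        have hA := (ih g H p₀ q hsz (hLp g hg) hH).1
        have hstep : Rout (g.add H) ≤ Lout ((node L R).add H) := by
          rw [Lout_add _ _ (Or.inl (node_ne_int L R))]
          exact le_lmax_of_mem (List.mem_append.2 (Or.inl (List.mem_map_of_mem hg)))
        simp only [Bool.not_not]
        rw [← hRout]
        refine le_trans hA (le_trans (add_le_add_left (WithBot.coe_le_coe.2 hstep) _) ?_)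
        exact add_le_add_right (max_le_max (bmul_mono q (gap_mono (Or.inl hg) _)) le_rfl) _
    · -- B'
      cases hH with
      | int b =>
        cases hG with
        | int a =>
          simp only [add_int_int, Rout_int, Lout_int, gap_int_false, bmul_zero, bmul_false,
            bmul_true, Bool.not_false, bmul_zero', max_self, WithBot.coe_zero, add_zero]
          rw [← WithBot.coe_add]
        | @node L R p₀ hL hR hLp hRp =>
          obtain ⟨g, hg, hRout⟩ := exists_lopt (R := R) hL
          have hsz : sizeOf g + sizeOf (int b) ≤ n := by
            have := sizeOf_lt_of_mem_lopts (G := node L R) hg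
            omega
          have hA := (ih g (int b) p₀ false hsz (hLp g hg) (IsWT.int b)).1
          have hA' : ((Lout (node L R) : ℤ) + b : ℤ) ≤ Rout (g.add (int b)) := by
            rw [← hRout]
            have := hA
            simp only [Rout_int, gap_int_false, bmul_zero, bmul_false, WithBot.coe_zero,
              bmul_zero', max_self, add_zero, ← WithBot.coe_add] at this
            exact_mod_cast this
          have hstep : Rout (g.add (int b)) ≤ Lout ((node L R).add (int b)) := by
            rw [Lout_add _ _ (Or.inl (node_ne_int L R))]
            exact le_lmax_of_mem (List.mem_append.2 (Or.inl (List.mem_map_of_mem hg)))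
          have hgap := le_gap (IsWT.node hL hR hLp hRp)
          calc ((Rout (node L R) : ℤ) : WithBot ℤ) + (Lout (int b) : ℤ)
              = ((Lout (node L R) + b : ℤ) : WithBot ℤ)
                + ((Rout (node L R) - Lout (node L R) : ℤ) : WithBot ℤ) := by
                rw [Lout_int, ← WithBot.coe_add, ← WithBot.coe_add]
                congr 1
                ring
            _ ≤ ((Lout ((node L R).add (int b)) : ℤ) : WithBot ℤ) + (node L R).gap (!p₀) :=
                add_le_add (WithBot.coe_le_coe.2 (le_trans hA' hstep)) hgap
            _ ≤ _ := by
                refine add_le_add_right (le_trans ?_ (le_max_left _ _)) _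
                simp [bmul]
      | @node L' R' q₀ hL' hR' hLp' hRp' =>
        obtain ⟨h, hh, hRout⟩ := exists_lopt (R := R') hL'
        have hsz : sizeOf G + sizeOf h ≤ n := by
          have := sizeOf_lt_of_mem_lopts (G := node L' R') hh
          omega
        have hA := (ih G h p q₀ hsz hG (hLp' h hh)).1
        have hstep : Rout (G.add h) ≤ Lout (G.add (node L' R')) := by
          rw [Lout_add _ _ (Or.inr (node_ne_int L' R'))]
          exact le_lmax_of_mem (List.mem_append.2 (Or.inr (List.mem_map_of_mem hh)))
        simp only [Bool.not_not]
        rw [← hRout]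
        refine le_trans hA (le_trans (add_le_add_left (WithBot.coe_le_coe.2 hstep) _) ?_)
        exact add_le_add_right (max_le_max le_rfl (bmul_mono p (gap_mono (Or.inl hh) _))) _

end WT

/-- R(G+H) ≥ R(G) + R(H) - max(π(H)·gap_{π(G)}(G), π(G)·gap_{π(H)}(H)) and
L(G+H) ≥ L(G) + R(H) - max(π(H)·gap_{1-π(G)}(G), (1-π(G))·gap_{π(H)}(H)), stated with the
(possibly infinite) max moved to the left-hand side to avoid subtracting `-∞`. -/
theorem sum_outcome_bounds (G H : WT) (p q : Bool) (hG : WT.IsWT G p) (hH : WT.IsWT H q) :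
    ((G.Rout : WithBot ℤ) + (H.Rout : WithBot ℤ) ≤
      ((G.add H).Rout : WithBot ℤ) + max (bmul q (G.gap p)) (bmul p (H.gap q))) ∧
    ((G.Lout : WithBot ℤ) + (H.Rout : WithBot ℤ) ≤
      ((G.add H).Lout : WithBot ℤ) + max (bmul q (G.gap (!p))) (bmul (!p) (H.gap q))) := by
  have h := WT.main (sizeOf G + sizeOf H) G H p q le_rfl hG hH
  exact ⟨h.1, h.2.1⟩
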